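/- arXiv:2408.08259 — 3 statements merged into one kernel-verified Lean document; each statement's English description precedes it below -/
import Mathlib

section
/- Let a ≤ L ≤ b be integers with b − a + 1 = 2^ℓ, let M ≥ ℓ, B ∈ {0,1}^M, and write B* = B*(L,a,b,B). Then for every j with 0 ≤ j ≤ ℓ, T([a_j(B*) + L : b_j(B*) + L]) ⊆ T([a:b]). -/
open MeasureTheory

noncomputable section

/-! ### Combinatorial definitions for NUTS orbit selection -/

/-- Floor midpoint `⌊(a+b)/2⌋`. -/
def mid (a b : ℤ) : ℤ := (a + b) / 2

/-- `(−1)^x` for a bit `x`. -/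
def signBit (x : Bool) : ℤ := if x then -1 else 1

/-- Left endpoint `a_ℓ(B)` of the orbit built from the Bernoulli directions `B` (1-indexed). -/
def aEnd (B : ℕ → Bool) : ℕ → ℤ
  | 0 => 0
  | ℓ + 1 => min (aEnd B ℓ) (aEnd B ℓ + signBit (B (ℓ + 1)) * 2 ^ ℓ)

/-- Right endpoint `b_ℓ(B)`. -/
def bEnd (B : ℕ → Bool) : ℕ → ℤ
  | 0 => 0
  | ℓ + 1 => max (bEnd B ℓ) (bEnd B ℓ + signBit (B (ℓ + 1)) * 2 ^ ℓ)

/-- Proposed extension endpoint `ã_ℓ(B) = a_{ℓ−1}(B) + (−1)^{B_ℓ} 2^{ℓ−1}` (for `ℓ ≥ 1`). -/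
def aT (B : ℕ → Bool) (ℓ : ℕ) : ℤ := aEnd B (ℓ - 1) + signBit (B ℓ) * 2 ^ (ℓ - 1)

/-- Proposed extension endpoint `b̃_ℓ(B) = b_{ℓ−1}(B) + (−1)^{B_ℓ} 2^{ℓ−1}` (for `ℓ ≥ 1`). -/
def bT (B : ℕ → Bool) (ℓ : ℕ) : ℤ := bEnd B (ℓ - 1) + signBit (B ℓ) * 2 ^ (ℓ - 1)

/-- The binary string `β(L,a,b)`: `beta ℓ L a b i` is the `i`-th bit (1-indexed) of
`(β_i(L,a,b))_{i ∈ [1:ℓ]}`, where `[a:b]` is an interval with `b − a + 1 = 2^ℓ`. -/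
def beta : ℕ → ℤ → ℤ → ℤ → ℕ → Bool
  | 0, _, _, _, _ => false
  | ℓ + 1, L, a, b, i =>
      if i = ℓ + 1 then decide (mid a b + 1 ≤ L)
      else if mid a b + 1 ≤ L then beta ℓ L (mid a b + 1) b i
      else beta ℓ L a (mid a b) i

/-- The transformed sequence `B*(L,a,b,B)`: bits `1..ℓ` come from `β(L,a,b)`, the rest from `B`. -/
def bstar (ℓ : ℕ) (L a b : ℤ) (B : ℕ → Bool) : ℕ → Bool :=
  fun i => if 1 ≤ i ∧ i ≤ ℓ then beta ℓ L a b i else B i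

/-- The domain `D`: tuples `(B, ℓ, a, b, L)` with `ℓ ∈ [1:M]`, `a = a_ℓ(B)`, `b = b_ℓ(B)`,
`a ≤ L ≤ b`. -/
def memD (M : ℕ) (B : ℕ → Bool) (ℓ : ℕ) (a b L : ℤ) : Prop :=
  1 ≤ ℓ ∧ ℓ ≤ M ∧ a = aEnd B ℓ ∧ b = bEnd B ℓ ∧ a ≤ L ∧ L ≤ b

/-- The levels of the binary tree of subintervals of `[a:b]`: `treeLevel a b k` is the family of
intervals (coded as pairs) obtained from `[a:b]` by `k` successive halvings; with
`b − a + 1 = 2^ℓ` this is `T_{ℓ−k}([a:b])` of the paper. -/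
def treeLevel (a b : ℤ) : ℕ → Set (ℤ × ℤ)
  | 0 => {(a, b)}
  | k + 1 => {p | ∃ q ∈ treeLevel a b k,
      p = (q.1, mid q.1 q.2) ∨ p = (mid q.1 q.2 + 1, q.2)}

/-- The binary tree `T([a:b]) = ∪_{j=0}^{ℓ} T_j([a:b])` of subintervals of an interval `[a:b]`
with `b − a + 1 = 2^ℓ`. -/
def tree (ℓ : ℕ) (a b : ℤ) : Set (ℤ × ℤ) := ⋃ k ≤ ℓ, treeLevel a b k

/-! ### Leapfrog dynamics -/

/-- The state space `ℝ^d`. -/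
abbrev ES (d : ℕ) := EuclideanSpace ℝ (Fin d)

/-- The momentum flip `S(θ,ρ) = (θ,−ρ)`. -/
def flipMom {d : ℕ} (p : ES d × ES d) : ES d × ES d := (p.1, -p.2)

/-- One leapfrog step of size `h` for the potential `U`. -/
def leapfrog {d : ℕ} (U : ES d → ℝ) (h : ℝ) (p : ES d × ES d) : ES d × ES d :=
  let ρh := p.2 - (h / 2) • gradient U p.1
  let θ' := p.1 + h • ρh
  (θ', ρh - (h / 2) • gradient U θ')

/-- Integer iterates `Φ_h^i`, `i ∈ ℤ`, of the leapfrog integrator (negative iterates use the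
inverse `S ∘ Φ_h ∘ S`). -/
def leapfrogIter {d : ℕ} (U : ES d → ℝ) (h : ℝ) : ℤ → ES d × ES d → ES d × ES d
  | Int.ofNat n => (leapfrog U h)^[n]
  | Int.negSucc n => (flipMom ∘ leapfrog U h ∘ flipMom)^[n + 1]

/-- The Hamiltonian `H(θ,ρ) = U(θ) + |ρ|²/2`. -/
def Ham {d : ℕ} (U : ES d → ℝ) (p : ES d × ES d) : ℝ := U p.1 + (1 / 2) * ‖p.2‖ ^ 2

open Classical in
/-- The U-turn indicator `𝟙_Uturn(a,b,θ,ρ,h,R)` (coarse step size `hs`, fine step `hs/R`). -/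
def uturnInd {d : ℕ} (U : ES d → ℝ) (hs : ℝ) (R : ℕ) (a b : ℤ) (p : ES d × ES d) : ℕ :=
  let qm := leapfrogIter U (hs / R) (R * a) p
  let qp := leapfrogIter U (hs / R) (R * b) p
  if (inner ℝ qp.2 (qp.1 - qm.1) : ℝ) < 0 ∨ (inner ℝ qm.2 (qp.1 - qm.1) : ℝ) < 0 then 1 else 0

/-- The sub-U-turn indicator `𝟙_subUturn(a,b,θ,ρ,h,R)`, defined recursively by halving. -/
def subUturnInd {d : ℕ} (U : ES d → ℝ) (hs : ℝ) (R : ℕ) (p : ES d × ES d) (a b : ℤ) : ℕ :=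
  if h : a < b then
    max (max (subUturnInd U hs R p a (mid a b)) (subUturnInd U hs R p (mid a b + 1) b))
      (uturnInd U hs R a b p)
  else 0
termination_by (b - a).toNat
decreasing_by
  · have h1 : a ≤ mid a b := by unfold mid; omega
    have h2 : mid a b < b := by unfold mid; omega
    omega
  · have h1 : a ≤ mid a b := by unfold mid; omega
    have h2 : mid a b < b := by unfold mid; omega
    omega

/-- The number of doublings `ℓ_min(θ,ρ,B,h,R)` selected by the no-U-turn procedure with at most
`2^M` leapfrog iterates. -/
def ellMin {d : ℕ} (U : ES d → ℝ) (hs : ℝ) (R : ℕ) (M : ℕ) (B : ℕ → Bool)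
    (p : ES d × ES d) : ℕ :=
  sInf ({ℓ | 1 ≤ ℓ ∧ ℓ ≤ M - 1 ∧
      (uturnInd U hs R (aEnd B ℓ) (bEnd B ℓ) p = 1 ∨
        subUturnInd U hs R p (aT B (ℓ + 1)) (bT B (ℓ + 1)) = 1)} ∪ {M})

/-- The categorical (Boltzmann) index-selection kernel `Q(L | θ, ρ, a, b, h, R)`. -/
def Qkernel {d : ℕ} (U : ES d → ℝ) (hs : ℝ) (R : ℕ) (p : ES d × ES d)
    (a b L : ℤ) : ℝ :=
  if a ≤ L ∧ L ≤ b then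
    Real.exp (-Ham U (leapfrogIter U (hs / R) (R * L) p)) /
      ∑ k ∈ Finset.Icc a b, Real.exp (-Ham U (leapfrogIter U (hs / R) (R * k) p))
  else 0

/-! ### The standard normal target -/

/-- One leapfrog step of size `h` for the standard normal potential `U(θ) = |θ|²/2`
(for which `∇U(θ) = θ`). -/
def gaussLeapfrog {d : ℕ} (h : ℝ) (p : ES d × ES d) : ES d × ES d :=
  let ρh := p.2 - (h / 2) • p.1
  let θ' := p.1 + h • ρh
  (θ', ρh - (h / 2) • θ')

/-- Integer iterates of the standard normal leapfrog integrator. -/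
def gaussLeapfrogIter {d : ℕ} (h : ℝ) : ℤ → ES d × ES d → ES d × ES d
  | Int.ofNat n => (gaussLeapfrog h)^[n]
  | Int.negSucc n => (flipMom ∘ gaussLeapfrog h ∘ flipMom)^[n + 1]

/-- The standard normal Hamiltonian `H(θ,ρ) = (|θ|² + |ρ|²)/2`. -/
def gaussHam {d : ℕ} (p : ES d × ES d) : ℝ := (1 / 2) * (‖p.1‖ ^ 2 + ‖p.2‖ ^ 2)

/-- The modified Hamiltonian `H_h(θ,ρ) = (1 − h²/4)|θ|²/2 + |ρ|²/2` preserved by the standard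
normal leapfrog integrator for `h ∈ (0,2)`. -/
def gaussHamMod {d : ℕ} (h : ℝ) (p : ES d × ES d) : ℝ :=
  (1 / 2) * (1 - h ^ 2 / 4) * ‖p.1‖ ^ 2 + (1 / 2) * ‖p.2‖ ^ 2

end

lemma aEnd_congr {B B' : ℕ → Bool} (j : ℕ) (h : ∀ i, 1 ≤ i → i ≤ j → B i = B' i) :
    aEnd B j = aEnd B' j := by
  induction j with
  | zero => rfl
  | succ n ih =>
    simp only [aEnd, ih (fun i h1 h2 => h i h1 (by omega)), h (n + 1) (by omega) le_rfl]

lemma bEnd_congr {B B' : ℕ → Bool} (j : ℕ) (h : ∀ i, 1 ≤ i → i ≤ j → B i = B' i) :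
    bEnd B j = bEnd B' j := by
  induction j with
  | zero => rfl
  | succ n ih =>
    simp only [bEnd, ih (fun i h1 h2 => h i h1 (by omega)), h (n + 1) (by omega) le_rfl]

lemma beta_succ_lt (ℓ : ℕ) (L a b : ℤ) (i : ℕ) (hi : i ≤ ℓ) :
    beta (ℓ + 1) L a b i =
      if mid a b + 1 ≤ L then beta ℓ L (mid a b + 1) b i else beta ℓ L a (mid a b) i := by
  simp only [beta]
  rw [if_neg (by omega)]

lemma treeLevel_trans {a b a' b' : ℤ} {k : ℕ} (h : (a', b') ∈ treeLevel a b k) :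
    ∀ k', treeLevel a' b' k' ⊆ treeLevel a b (k + k') := by
  intro k'
  induction k' with
  | zero =>
    intro p hp
    simp only [treeLevel, Set.mem_singleton_iff] at hp
    simpa [hp] using h
  | succ n ih =>
    intro p hp
    obtain ⟨q, hq, hpq⟩ := hp
    exact ⟨q, ih hq, hpq⟩

lemma key_beta : ∀ ℓ : ℕ, ∀ a b L : ℤ, b - a + 1 = 2 ^ ℓ → a ≤ L → L ≤ b → ∀ j ≤ ℓ,
    (aEnd (beta ℓ L a b) j + L, bEnd (beta ℓ L a b) j + L) ∈ treeLevel a b (ℓ - j) := by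
  intro ℓ
  induction ℓ with
  | zero =>
    intro a b L hsize h1 h2 j hj
    interval_cases j
    simp only [aEnd, bEnd, Nat.sub_self, treeLevel, Set.mem_singleton_iff, Prod.ext_iff]
    constructor <;> omega
  | succ n ih =>
    intro a b L hsize h1 h2 j hj
    have hX : (0 : ℤ) < 2 ^ n := by positivity
    have h2pow : (2 : ℤ) ^ (n + 1) = 2 * 2 ^ n := by ring
    have hmdef : mid a b = (a + b) / 2 := rfl
    have hm1 : mid a b - a + 1 = 2 ^ n := by omega
    have hm2 : b - mid a b = 2 ^ n := by omega
    by_cases hc : mid a b + 1 ≤ L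
    · -- right half
      have hcongrA : ∀ j' ≤ n, aEnd (beta (n + 1) L a b) j' = aEnd (beta n L (mid a b + 1) b) j' :=
        fun j' hj' => aEnd_congr j' (fun i hi1 hi2 => by
          rw [beta_succ_lt n L a b i (by omega), if_pos hc])
      have hcongrB : ∀ j' ≤ n, bEnd (beta (n + 1) L a b) j' = bEnd (beta n L (mid a b + 1) b) j' :=
        fun j' hj' => bEnd_congr j' (fun i hi1 hi2 => by
          rw [beta_succ_lt n L a b i (by omega), if_pos hc])
      have hchild : (mid a b + 1, b) ∈ treeLevel a b 1 :=
        ⟨(a, b), rfl, Or.inr rfl⟩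
      rcases Nat.lt_or_ge j (n + 1) with hjn | hjn
      · have hjn' : j ≤ n := by omega
        have hmem := ih (mid a b + 1) b L (by omega) hc h2 j hjn'
        rw [hcongrA j hjn', hcongrB j hjn']
        have := treeLevel_trans hchild (n - j) hmem
        have heq : 1 + (n - j) = n + 1 - j := by omega
        rwa [heq] at this
      · have hj' : j = n + 1 := by omega
        subst hj'
        have hmem := ih (mid a b + 1) b L (by omega) hc h2 n le_rfl
        simp only [Nat.sub_self, treeLevel, Set.mem_singleton_iff, Prod.ext_iff] at hmem ⊢
        have hA : aEnd (beta (n + 1) L a b) n + L = mid a b + 1 := by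
          rw [hcongrA n le_rfl]; exact hmem.1
        have hB : bEnd (beta (n + 1) L a b) n + L = b := by
          rw [hcongrB n le_rfl]; exact hmem.2
        have hbit : beta (n + 1) L a b (n + 1) = true := by
          simp only [beta, if_pos rfl]
          exact decide_eq_true hc
        simp only [aEnd, bEnd, hbit, signBit, if_true]
        constructor <;> omega
    · -- left half
      have hL : L ≤ mid a b := by omega
      have hcongrA : ∀ j' ≤ n, aEnd (beta (n + 1) L a b) j' = aEnd (beta n L a (mid a b)) j' :=
        fun j' hj' => aEnd_congr j' (fun i hi1 hi2 => by
          rw [beta_succ_lt n L a b i (by omega), if_neg hc])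
      have hcongrB : ∀ j' ≤ n, bEnd (beta (n + 1) L a b) j' = bEnd (beta n L a (mid a b)) j' :=
        fun j' hj' => bEnd_congr j' (fun i hi1 hi2 => by
          rw [beta_succ_lt n L a b i (by omega), if_neg hc])
      have hchild : (a, mid a b) ∈ treeLevel a b 1 :=
        ⟨(a, b), rfl, Or.inl rfl⟩
      rcases Nat.lt_or_ge j (n + 1) with hjn | hjn
      · have hjn' : j ≤ n := by omega
        have hmem := ih a (mid a b) L (by omega) h1 hL j hjn'
        rw [hcongrA j hjn', hcongrB j hjn']
        have := treeLevel_trans hchild (n - j) hmem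
        have heq : 1 + (n - j) = n + 1 - j := by omega
        rwa [heq] at this
      · have hj' : j = n + 1 := by omega
        subst hj'
        have hmem := ih a (mid a b) L (by omega) h1 hL n le_rfl
        simp only [Nat.sub_self, treeLevel, Set.mem_singleton_iff, Prod.ext_iff] at hmem ⊢
        have hA : aEnd (beta (n + 1) L a b) n + L = a := by
          rw [hcongrA n le_rfl]; exact hmem.1
        have hB : bEnd (beta (n + 1) L a b) n + L = mid a b := by
          rw [hcongrB n le_rfl]; exact hmem.2
        have hbit : beta (n + 1) L a b (n + 1) = false := by
          simp only [beta, if_pos rfl]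
          exact decide_eq_false hc
        simp only [aEnd, bEnd, hbit, signBit, if_false, Bool.false_eq_true]
        constructor <;> omega

/-- For `a ≤ L ≤ b` with `b − a + 1 = 2^ℓ`, `M ≥ ℓ`, `B ∈ {0,1}^M` and
`B* = B*(L,a,b,B)`: for every `0 ≤ j ≤ ℓ`, `T([a_j(B*)+L : b_j(B*)+L]) ⊆ T([a:b])`. -/
theorem tree_bstar_subset (M ℓ : ℕ) (hℓM : ℓ ≤ M) (B : ℕ → Bool) (a b L : ℤ)
    (h1 : a ≤ L) (h2 : L ≤ b) (hsize : b - a + 1 = 2 ^ ℓ) :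
    ∀ j ≤ ℓ,
      tree j (aEnd (bstar ℓ L a b B) j + L) (bEnd (bstar ℓ L a b B) j + L) ⊆ tree ℓ a b := by
  intro j hj
  have hcA : aEnd (bstar ℓ L a b B) j = aEnd (beta ℓ L a b) j :=
    aEnd_congr j (fun i hi1 hi2 => by simp [bstar, hi1, hi2.trans hj])
  have hcB : bEnd (bstar ℓ L a b B) j = bEnd (beta ℓ L a b) j :=
    bEnd_congr j (fun i hi1 hi2 => by simp [bstar, hi1, hi2.trans hj])
  rw [hcA, hcB]
  have hmem := key_beta ℓ a b L hsize h1 h2 j hj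
  intro p hp
  simp only [tree, Set.mem_iUnion] at hp ⊢
  obtain ⟨k, hk, hpk⟩ := hp
  exact ⟨ℓ - j + k, by omega, treeLevel_trans hmem k hpk⟩
end

section
/- Let (θ,ρ) ∈ ℝ^{2d}, h > 0, R ≥ 1, M ∈ ℕ, B ∈ {0,1}^M. Write ℓ_min = ℓ_min(θ,ρ,B,h,R), a_T = a_{ℓ_min}(B), b_T = b_{ℓ_min}(B), let L ∈ [a_T : b_T], and set B* = B*(L, a_T, b_T, B). Then for every ℓ < ℓ_min, the collection T([a_ℓ(B*) + L : b_ℓ(B*) + L]) ∪ T([ã_{ℓ+1}(B*) + L : b̃_{ℓ+1}(B*) + L]) is sub-U-turn free for (θ,ρ,h,R); that is, 𝟙_Uturn(ã,b̃,θ,ρ,h,R) = 0 for every interval [ã:b̃] in this union. -/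
open MeasureTheory

section Aux

lemma mem_treeLevel_zero {a b : ℤ} {q : ℤ × ℤ} : q ∈ treeLevel a b 0 ↔ q = (a, b) := Iff.rfl

lemma mem_treeLevel_succ {a b : ℤ} {k : ℕ} {q : ℤ × ℤ} :
    q ∈ treeLevel a b (k + 1) ↔
      ∃ r ∈ treeLevel a b k, q = (r.1, mid r.1 r.2) ∨ q = (mid r.1 r.2 + 1, r.2) := Iff.rfl

variable {d : ℕ} (U : ES d → ℝ) (hs : ℝ) (R : ℕ) (p : ES d × ES d)

lemma uturn_self (a : ℤ) : uturnInd U hs R a a p = 0 := by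
  simp [uturnInd]

lemma uturn_le_one (a b : ℤ) : uturnInd U hs R a b p ≤ 1 := by
  simp only [uturnInd]; split <;> simp

lemma sub_le_one (a b : ℤ) : subUturnInd U hs R p a b ≤ 1 := by
  rw [subUturnInd]
  split
  · exact max_le (max_le (sub_le_one _ _) (sub_le_one _ _)) (uturn_le_one U hs R p a b)
  · omega
termination_by (b - a).toNat
decreasing_by
  · unfold mid; omega
  · unfold mid; omega

lemma subU_self (a : ℤ) : subUturnInd U hs R p a a = 0 := by
  rw [subUturnInd, dif_neg (lt_irrefl a)]

lemma sub_zero_parts {a b : ℤ} (hab : a < b) (h : subUturnInd U hs R p a b = 0) :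
    subUturnInd U hs R p a (mid a b) = 0 ∧ subUturnInd U hs R p (mid a b + 1) b = 0 ∧
      uturnInd U hs R a b p = 0 := by
  rw [subUturnInd, dif_pos hab] at h
  omega

lemma uturn_of_sub {a b : ℤ} (hab : a ≤ b) (h : subUturnInd U hs R p a b = 0) :
    uturnInd U hs R a b p = 0 := by
  rcases lt_or_eq_of_le hab with h' | h'
  · exact (sub_zero_parts U hs R p h' h).2.2
  · exact h' ▸ uturn_self U hs R p a

end Aux
section Aux2

lemma treeLevel_comp {a b : ℤ} {k : ℕ} :
    ∀ (j : ℕ) (r : ℤ × ℤ), r ∈ treeLevel a b k → ∀ q ∈ treeLevel r.1 r.2 j,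
      q ∈ treeLevel a b (k + j) := by
  intro j
  induction j with
  | zero =>
    intro r hr q hq
    rw [mem_treeLevel_zero] at hq
    simpa [hq] using hr
  | succ j ih =>
    intro r hr q hq
    rw [mem_treeLevel_succ] at hq
    obtain ⟨q', hq', hor⟩ := hq
    exact mem_treeLevel_succ.2 ⟨q', ih r hr q' hq', hor⟩

lemma treeLevel_decomp {a b : ℤ} :
    ∀ (k : ℕ) (q : ℤ × ℤ), q ∈ treeLevel a b (k + 1) →
      ∃ c ∈ treeLevel a b 1, q ∈ treeLevel c.1 c.2 k := by
  intro k
  induction k with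
  | zero => exact fun q hq => ⟨q, hq, mem_treeLevel_zero.2 rfl⟩
  | succ k ih =>
    intro q hq
    rw [mem_treeLevel_succ] at hq
    obtain ⟨q', hq', hor⟩ := hq
    obtain ⟨c, hc, hq'c⟩ := ih q' hq'
    exact ⟨c, hc, mem_treeLevel_succ.2 ⟨q', hq'c, hor⟩⟩

lemma treeLevel_len {a b : ℤ} :
    ∀ (k j : ℕ), b = a + 2 ^ (k + j) - 1 → ∀ q ∈ treeLevel a b k, q.2 = q.1 + 2 ^ j - 1 := by
  intro k
  induction k with
  | zero =>
    intro j hb q hq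
    rw [mem_treeLevel_zero] at hq
    simp [hq, hb]
  | succ k ih =>
    intro j hb q hq
    rw [mem_treeLevel_succ] at hq
    obtain ⟨r, hr, hor⟩ := hq
    have hb' : b = a + 2 ^ (k + (j + 1)) - 1 := by rw [hb]; ring_nf
    have hlen : r.2 = r.1 + 2 ^ (j + 1) - 1 := ih (j + 1) hb' r hr
    have h2 : (2 : ℤ) ^ (j + 1) = 2 * 2 ^ j := by ring
    have hmid : mid r.1 r.2 = r.1 + 2 ^ j - 1 := by unfold mid; omega
    rcases hor with rfl | rfl <;> simp <;> omega

lemma mid_shift (x y L : ℤ) : mid (x + L) (y + L) = mid x y + L := by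
  unfold mid; omega

end Aux2
section Aux3

variable {d : ℕ} (U : ES d → ℝ) (hs : ℝ) (R : ℕ) (p : ES d × ES d)

lemma sub_zero_tree :
    ∀ (k j : ℕ) (a b : ℤ), b = a + 2 ^ (k + j) - 1 → subUturnInd U hs R p a b = 0 →
      ∀ q ∈ treeLevel a b k, subUturnInd U hs R p q.1 q.2 = 0 := by
  intro k
  induction k with
  | zero =>
    intro j a b hb hsub q hq
    rw [mem_treeLevel_zero] at hq
    simp [hq, hsub]
  | succ k ih =>
    intro j a b hb hsub q hq
    rw [mem_treeLevel_succ] at hq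
    obtain ⟨r, hr, hor⟩ := hq
    have hb' : b = a + 2 ^ (k + (j + 1)) - 1 := by rw [hb]; ring_nf
    have hsubr : subUturnInd U hs R p r.1 r.2 = 0 := ih (j + 1) a b hb' hsub r hr
    have hlen : r.2 = r.1 + 2 ^ (j + 1) - 1 := treeLevel_len k (j + 1) hb' r hr
    have h2 : (2 : ℤ) ^ (j + 1) = 2 * 2 ^ j := by ring
    have h3 : (0 : ℤ) < 2 ^ j := by positivity
    have hlt : r.1 < r.2 := by omega
    obtain ⟨hL, hR, _⟩ := sub_zero_parts U hs R p hlt hsubr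
    rcases hor with rfl | rfl <;> simpa using (by assumption : _)

lemma len_end (C : ℕ → Bool) : ∀ ℓ, bEnd C ℓ = aEnd C ℓ + 2 ^ ℓ - 1 := by
  intro ℓ
  induction ℓ with
  | zero => simp [aEnd, bEnd]
  | succ ℓ ih =>
    have h2 : (2 : ℤ) ^ (ℓ + 1) = 2 * 2 ^ ℓ := by ring
    have h3 : (0 : ℤ) < 2 ^ ℓ := by positivity
    cases hC : C (ℓ + 1) <;> simp [aEnd, bEnd, signBit, hC] <;> omega

lemma halves_pair (C : ℕ → Bool) (ℓ : ℕ) :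
    (aEnd C (ℓ + 1) = aEnd C ℓ ∧ mid (aEnd C (ℓ + 1)) (bEnd C (ℓ + 1)) = bEnd C ℓ ∧
      mid (aEnd C (ℓ + 1)) (bEnd C (ℓ + 1)) + 1 = aT C (ℓ + 1) ∧ bEnd C (ℓ + 1) = bT C (ℓ + 1)) ∨
    (aEnd C (ℓ + 1) = aT C (ℓ + 1) ∧ mid (aEnd C (ℓ + 1)) (bEnd C (ℓ + 1)) = bT C (ℓ + 1) ∧
      mid (aEnd C (ℓ + 1)) (bEnd C (ℓ + 1)) + 1 = aEnd C ℓ ∧ bEnd C (ℓ + 1) = bEnd C ℓ) := by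
  have hlen := len_end C ℓ
  have h2 : (2 : ℤ) ^ (ℓ + 1) = 2 * 2 ^ ℓ := by ring
  have h3 : (0 : ℤ) < 2 ^ ℓ := by positivity
  cases hC : C (ℓ + 1)
  · left
    simp only [aEnd, bEnd, aT, bT, signBit, hC, mid, Nat.add_sub_cancel, if_false,
      Bool.false_eq_true]
    refine ⟨by omega, by omega, by omega, by omega⟩
  · right
    simp only [aEnd, bEnd, aT, bT, signBit, hC, mid, Nat.add_sub_cancel, if_true]
    refine ⟨by omega, by omega, by omega, by omega⟩

lemma aEnd_congr_s9 {B1 B2 : ℕ → Bool} :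
    ∀ ℓ, (∀ i, 1 ≤ i → i ≤ ℓ → B1 i = B2 i) → aEnd B1 ℓ = aEnd B2 ℓ ∧ bEnd B1 ℓ = bEnd B2 ℓ := by
  intro ℓ
  induction ℓ with
  | zero => intro _; simp [aEnd, bEnd]
  | succ ℓ ih =>
    intro h
    obtain ⟨ha, hb⟩ := ih fun i h1 h2 => h i h1 (h2.trans (Nat.le_succ ℓ))
    rw [aEnd, bEnd, aEnd, bEnd, ha, hb, h (ℓ + 1) (by omega) le_rfl]
    exact ⟨rfl, rfl⟩

end Aux3
section Aux4

lemma bstar_mem :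
    ∀ (n : ℕ) (a b L : ℤ) (B : ℕ → Bool), b = a + 2 ^ n - 1 → a ≤ L → L ≤ b →
      ∀ ℓ ≤ n, (aEnd (bstar n L a b B) ℓ + L, bEnd (bstar n L a b B) ℓ + L) ∈
        treeLevel a b (n - ℓ) := by
  intro n
  induction n with
  | zero =>
    intro a b L B hb ha hL ℓ hℓ
    interval_cases ℓ
    rw [mem_treeLevel_zero]
    have : a = L ∧ b = L := by omega
    simp [aEnd, bEnd, this.1, this.2]
  | succ n ih =>
    intro a b L B hb ha hL ℓ hℓ
    have h2 : (2 : ℤ) ^ (n + 1) = 2 * 2 ^ n := by ring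
    have h3 : (0 : ℤ) < 2 ^ n := by positivity
    have hm : mid a b = a + 2 ^ n - 1 := by unfold mid; omega
    by_cases hc : mid a b + 1 ≤ L
    · -- right half
      set a' : ℤ := mid a b + 1 with ha'
      have hb' : b = a' + 2 ^ n - 1 := by omega
      have hagree : ∀ i, 1 ≤ i → i ≤ n →
          bstar (n + 1) L a b B i = bstar n L a' b B i := by
        intro i h1 h2'
        simp only [bstar, beta, if_pos (by omega : 1 ≤ i ∧ i ≤ n + 1),
          if_pos (And.intro h1 h2'), if_neg (by omega : ¬ i = n + 1), ← ha', if_pos hc]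
      have hbit : bstar (n + 1) L a b B (n + 1) = true := by
        simp only [bstar, beta, if_pos (by omega : 1 ≤ n + 1 ∧ n + 1 ≤ n + 1), if_pos rfl]
        exact decide_eq_true hc
      have hmem' : ∀ ℓ' ≤ n, (aEnd (bstar (n + 1) L a b B) ℓ' + L,
          bEnd (bstar (n + 1) L a b B) ℓ' + L) ∈ treeLevel a' b (n - ℓ') := by
        intro ℓ' hℓ'
        obtain ⟨hae, hbe⟩ := aEnd_congr_s9 ℓ' fun i hi1 hi2 => hagree i hi1 (hi2.trans hℓ')
        rw [hae, hbe]
        exact ih a' b L B hb' (by omega) hL ℓ' hℓ'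
      have hmemhalf : (a', b) ∈ treeLevel a b 1 :=
        mem_treeLevel_succ.2 ⟨(a, b), mem_treeLevel_zero.2 rfl, Or.inr rfl⟩
      rcases Nat.lt_or_ge ℓ (n + 1) with hlt | hge
      · have hℓn : ℓ ≤ n := by omega
        have := treeLevel_comp (n - ℓ) (a', b) hmemhalf _ (hmem' ℓ hℓn)
        have heq : 1 + (n - ℓ) = n + 1 - ℓ := by omega
        rwa [heq] at this
      · have hℓeq : ℓ = n + 1 := by omega
        subst hℓeq
        have hn := hmem' n le_rfl
        rw [Nat.sub_self, mem_treeLevel_zero, Prod.ext_iff] at hn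
        have hA : aEnd (bstar (n + 1) L a b B) n + L = a' := hn.1
        have hB : bEnd (bstar (n + 1) L a b B) n + L = b := hn.2
        rw [Nat.sub_self, mem_treeLevel_zero]
        rw [aEnd, bEnd, hbit]
        simp only [signBit, if_true, Prod.mk.injEq]
        constructor <;> omega
    · -- left half
      set b' : ℤ := mid a b with hb'def
      have hb' : b' = a + 2 ^ n - 1 := hm
      have hagree : ∀ i, 1 ≤ i → i ≤ n →
          bstar (n + 1) L a b B i = bstar n L a b' B i := by
        intro i h1 h2'
        simp only [bstar, beta, if_pos (by omega : 1 ≤ i ∧ i ≤ n + 1),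
          if_pos (And.intro h1 h2'), if_neg (by omega : ¬ i = n + 1), ← hb'def, if_neg hc]
      have hbit : bstar (n + 1) L a b B (n + 1) = false := by
        simp only [bstar, beta, if_pos (by omega : 1 ≤ n + 1 ∧ n + 1 ≤ n + 1), if_pos rfl]
        simpa using hc
      have hmem' : ∀ ℓ' ≤ n, (aEnd (bstar (n + 1) L a b B) ℓ' + L,
          bEnd (bstar (n + 1) L a b B) ℓ' + L) ∈ treeLevel a b' (n - ℓ') := by
        intro ℓ' hℓ'
        obtain ⟨hae, hbe⟩ := aEnd_congr_s9 ℓ' fun i hi1 hi2 => hagree i hi1 (hi2.trans hℓ')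
        rw [hae, hbe]
        exact ih a b' L B (by omega) ha (by omega) ℓ' hℓ'
      have hmemhalf : (a, b') ∈ treeLevel a b 1 :=
        mem_treeLevel_succ.2 ⟨(a, b), mem_treeLevel_zero.2 rfl, Or.inl rfl⟩
      rcases Nat.lt_or_ge ℓ (n + 1) with hlt | hge
      · have hℓn : ℓ ≤ n := by omega
        have := treeLevel_comp (n - ℓ) (a, b') hmemhalf _ (hmem' ℓ hℓn)
        have heq : 1 + (n - ℓ) = n + 1 - ℓ := by omega
        rwa [heq] at this
      · have hℓeq : ℓ = n + 1 := by omega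
        subst hℓeq
        have hn := hmem' n le_rfl
        rw [Nat.sub_self, mem_treeLevel_zero, Prod.ext_iff] at hn
        have hA : aEnd (bstar (n + 1) L a b B) n + L = a := hn.1
        have hB : bEnd (bstar (n + 1) L a b B) n + L = b' := hn.2
        rw [Nat.sub_self, mem_treeLevel_zero]
        rw [aEnd, bEnd, hbit]
        simp only [signBit, if_false, Bool.false_eq_true, Prod.mk.injEq]
        constructor <;> omega

end Aux4
/-- With `ℓ_min = ℓ_min(θ,ρ,B,h,R)`, `a_T = a_{ℓ_min}(B)`, `b_T = b_{ℓ_min}(B)`,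
`L ∈ [a_T:b_T]` and `B* = B*(L,a_T,b_T,B)`: for every `ℓ < ℓ_min`, the collection
`T([a_ℓ(B*)+L : b_ℓ(B*)+L]) ∪ T([ã_{ℓ+1}(B*)+L : b̃_{ℓ+1}(B*)+L])` is sub-U-turn free. -/
theorem tree_bstar_uturn_free_below_ellMin {d : ℕ} (U : ES d → ℝ) (hU : ContDiff ℝ 1 U)
    (hs : ℝ) (hhs : 0 < hs) (R : ℕ) (hR : 1 ≤ R) (M : ℕ) (B : ℕ → Bool) (p : ES d × ES d)
    (lm : ℕ) (hlm : lm = ellMin U hs R M B p) (L : ℤ)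
    (hL1 : aEnd B lm ≤ L) (hL2 : L ≤ bEnd B lm)
    (Bs : ℕ → Bool) (hBs : Bs = bstar lm L (aEnd B lm) (bEnd B lm) B) :
    ∀ ℓ < lm,
      ∀ q ∈ tree ℓ (aEnd Bs ℓ + L) (bEnd Bs ℓ + L) ∪
              tree ℓ (aT Bs (ℓ + 1) + L) (bT Bs (ℓ + 1) + L),
        uturnInd U hs R q.1 q.2 p = 0 := by
  subst hBs
  rw [ellMin] at hlm
  -- facts extracted from the minimality of `ellMin`
  have hM : lm ≤ M := hlm ▸ Nat.sInf_le (Set.mem_union_right _ rfl)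
  have hfact : ∀ ℓ', 1 ≤ ℓ' → ℓ' < lm →
      uturnInd U hs R (aEnd B ℓ') (bEnd B ℓ') p = 0 ∧
        subUturnInd U hs R p (aT B (ℓ' + 1)) (bT B (ℓ' + 1)) = 0 := by
    intro ℓ' h1 h2
    have hnot : ℓ' ∉ ({ℓ | 1 ≤ ℓ ∧ ℓ ≤ M - 1 ∧
        (uturnInd U hs R (aEnd B ℓ) (bEnd B ℓ) p = 1 ∨
          subUturnInd U hs R p (aT B (ℓ + 1)) (bT B (ℓ + 1)) = 1)} ∪ {M}) := by
      intro hmem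
      have hle := Nat.sInf_le hmem
      omega
    simp only [Set.mem_union, Set.mem_setOf_eq, Set.mem_singleton_iff, not_or, not_and] at hnot
    have hor := hnot.1 h1 (by omega)
    have hu1 := uturn_le_one U hs R p (aEnd B ℓ') (bEnd B ℓ')
    have hs1 := sub_le_one U hs R p (aT B (ℓ' + 1)) (bT B (ℓ' + 1))
    constructor <;> omega
  -- sub-U-turn freeness of the proposed extensions below `lm`
  have hT : ∀ ℓ', ℓ' < lm →
      subUturnInd U hs R p (aT B (ℓ' + 1)) (bT B (ℓ' + 1)) = 0 := by
    intro ℓ' h2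
    rcases Nat.eq_zero_or_pos ℓ' with rfl | hpos
    · have he : aT B 1 = bT B 1 := by simp [aT, bT, aEnd, bEnd]
      rw [he]
      exact subU_self U hs R p _
    · exact (hfact ℓ' hpos h2).2
  -- sub-U-turn freeness of the accepted orbits below `lm`
  have hP : ∀ ℓ', ℓ' < lm →
      subUturnInd U hs R p (aEnd B ℓ') (bEnd B ℓ') = 0 := by
    intro ℓ'
    induction ℓ' with
    | zero => simpa [aEnd, bEnd] using fun _ => subU_self U hs R p 0
    | succ ℓ' ih =>
      intro hlt
      have hsub0 := ih (by omega)
      have hTl := hT ℓ' (by omega)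
      have hu : uturnInd U hs R (aEnd B (ℓ' + 1)) (bEnd B (ℓ' + 1)) p = 0 :=
        (hfact (ℓ' + 1) (by omega) hlt).1
      have hlen := len_end B (ℓ' + 1)
      have h2 : (2 : ℤ) ^ (ℓ' + 1) = 2 * 2 ^ ℓ' := by ring
      have h3 : (0 : ℤ) < 2 ^ ℓ' := by positivity
      have hlt2 : aEnd B (ℓ' + 1) < bEnd B (ℓ' + 1) := by omega
      rcases halves_pair B ℓ' with ⟨e1, e2, e3, e4⟩ | ⟨e1, e2, e3, e4⟩
      · have c1 : subUturnInd U hs R p (aEnd B (ℓ' + 1))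
            (mid (aEnd B (ℓ' + 1)) (bEnd B (ℓ' + 1))) = 0 := by rw [e2, e1]; exact hsub0
        have c2 : subUturnInd U hs R p (mid (aEnd B (ℓ' + 1)) (bEnd B (ℓ' + 1)) + 1)
            (bEnd B (ℓ' + 1)) = 0 := by rw [e3, e4]; exact hTl
        rw [subUturnInd, dif_pos hlt2, c1, c2, hu]
        simp
      · have c1 : subUturnInd U hs R p (aEnd B (ℓ' + 1))
            (mid (aEnd B (ℓ' + 1)) (bEnd B (ℓ' + 1))) = 0 := by rw [e2, e1]; exact hTl
        have c2 : subUturnInd U hs R p (mid (aEnd B (ℓ' + 1)) (bEnd B (ℓ' + 1)) + 1)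
            (bEnd B (ℓ' + 1)) = 0 := by rw [e3, e4]; exact hsub0
        rw [subUturnInd, dif_pos hlt2, c1, c2, hu]
        simp
  intro ℓ hℓ q hq
  obtain ⟨n, rfl⟩ : ∃ n, lm = n + 1 := ⟨lm - 1, by omega⟩
  have hab : bEnd B (n + 1) = aEnd B (n + 1) + 2 ^ (n + 1) - 1 := len_end B (n + 1)
  have h2 : (2 : ℤ) ^ (n + 1) = 2 * 2 ^ n := by ring
  have h3 : (0 : ℤ) < 2 ^ n := by positivity
  have hm : mid (aEnd B (n + 1)) (bEnd B (n + 1)) = aEnd B (n + 1) + 2 ^ n - 1 := by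
    unfold mid; omega
  -- every interval in `treeLevel a b 1` is sub-U-turn free and has length `2^n`
  have hchild : ∀ c ∈ treeLevel (aEnd B (n + 1)) (bEnd B (n + 1)) 1,
      subUturnInd U hs R p c.1 c.2 = 0 ∧ c.2 = c.1 + 2 ^ n - 1 := by
    intro c hc
    rw [mem_treeLevel_succ] at hc
    obtain ⟨r0, hr0, hor⟩ := hc
    rw [mem_treeLevel_zero] at hr0
    subst hr0
    rcases halves_pair B n with ⟨e1, e2, e3, e4⟩ | ⟨e1, e2, e3, e4⟩ <;>
      rcases hor with rfl | rfl <;> dsimp only <;> refine ⟨?_, by omega⟩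
    · rw [e2, e1]; exact hP n (by omega)
    · rw [e3, e4]; exact hT n (by omega)
    · rw [e2, e1]; exact hT n (by omega)
    · rw [e3, e4]; exact hP n (by omega)
  -- the main argument, for any root at depth `(n+1) - ℓ`
  have hmain : ∀ r ∈ treeLevel (aEnd B (n + 1)) (bEnd B (n + 1)) (n + 1 - ℓ),
      ∀ j ≤ ℓ, q ∈ treeLevel r.1 r.2 j → uturnInd U hs R q.1 q.2 p = 0 := by
    intro r hr j hj hqj
    have hq' : q ∈ treeLevel (aEnd B (n + 1)) (bEnd B (n + 1)) ((n + 1 - ℓ) + j) :=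
      treeLevel_comp j r hr q hqj
    have hk : (n + 1 - ℓ) + j = ((n + 1 - ℓ) + j - 1) + 1 := by omega
    rw [hk] at hq'
    obtain ⟨c, hc1, hqc⟩ := treeLevel_decomp _ q hq'
    obtain ⟨hcsub, hclen⟩ := hchild c hc1
    have hkn : (n + 1 - ℓ) + j - 1 ≤ n := by omega
    have hlenc : c.2 = c.1 + 2 ^ (((n + 1 - ℓ) + j - 1) + (n - ((n + 1 - ℓ) + j - 1))) - 1 := by
      rw [Nat.add_sub_cancel' hkn]; exact hclen
    have hsubq : subUturnInd U hs R p q.1 q.2 = 0 :=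
      sub_zero_tree U hs R p _ _ c.1 c.2 hlenc hcsub q hqc
    have hlenq : q.2 = q.1 + 2 ^ (n - ((n + 1 - ℓ) + j - 1)) - 1 :=
      treeLevel_len _ _ hlenc q hqc
    have h4 : (0 : ℤ) < 2 ^ (n - ((n + 1 - ℓ) + j - 1)) := by positivity
    exact uturn_of_sub U hs R p (by omega) hsubq
  -- roots membership
  have hmemE := bstar_mem (n + 1) (aEnd B (n + 1)) (bEnd B (n + 1)) L B hab hL1 hL2 ℓ (by omega)
  have hmemP := bstar_mem (n + 1) (aEnd B (n + 1)) (bEnd B (n + 1)) L B hab hL1 hL2 (ℓ + 1)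
    (by omega)
  set Bs := bstar (n + 1) L (aEnd B (n + 1)) (bEnd B (n + 1)) B with hBsdef
  have hmemT : (aT Bs (ℓ + 1) + L, bT Bs (ℓ + 1) + L) ∈
      treeLevel (aEnd B (n + 1)) (bEnd B (n + 1)) (n + 1 - ℓ) := by
    have hk : n + 1 - ℓ = (n + 1 - (ℓ + 1)) + 1 := by omega
    rw [hk]
    rcases halves_pair Bs ℓ with ⟨e1, e2, e3, e4⟩ | ⟨e1, e2, e3, e4⟩
    · refine mem_treeLevel_succ.2 ⟨(aEnd Bs (ℓ + 1) + L, bEnd Bs (ℓ + 1) + L), hmemP, Or.inr ?_⟩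
      simp only [mid_shift, Prod.mk.injEq]
      constructor <;> omega
    · refine mem_treeLevel_succ.2 ⟨(aEnd Bs (ℓ + 1) + L, bEnd Bs (ℓ + 1) + L), hmemP, Or.inl ?_⟩
      simp only [mid_shift, Prod.mk.injEq]
      constructor <;> omega
  simp only [tree, Set.mem_union, Set.mem_iUnion] at hq
  rcases hq with ⟨j, hj, hqj⟩ | ⟨j, hj, hqj⟩
  · exact hmain (aEnd Bs ℓ + L, bEnd Bs ℓ + L) hmemE j hj hqj
  · exact hmain (aT Bs (ℓ + 1) + L, bT Bs (ℓ + 1) + L) hmemT j hj hqj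
end

section
/- For the standard normal target in dimension d, h ∈ (0,2), and any (θ,ρ) ∈ ℝ^{2d}, the energy error envelope along the two-sided leapfrog path is controlled by the modified Hamiltonian: for all i, j ∈ ℤ, H(Φ_h^i(θ,ρ)) − H(Φ_h^j(θ,ρ)) ≤ (h²/(4 − h²)) · H_h(θ,ρ). In particular, (H⁺ − H⁻)(Φ_h^i(θ,ρ)) ≤ (h²/(4 − h²)) · H_h(θ,ρ) for every i ∈ ℤ, where H⁺ and H⁻ denote the supremum and infimum of H over the leapfrog path through the given point. -/
open MeasureTheory

lemma gaussHamMod_step {d : ℕ} (h : ℝ) (q : ES d × ES d) :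
    gaussHamMod h (gaussLeapfrog h q) = gaussHamMod h q := by
  simp only [gaussHamMod, gaussLeapfrog]
  simp only [← real_inner_self_eq_norm_sq]
  simp only [inner_add_left, inner_add_right, inner_sub_left, inner_sub_right,
    inner_smul_left, inner_smul_right, real_inner_comm q.1 q.2, conj_trivial]
  ring

lemma gaussHamMod_flip {d : ℕ} (h : ℝ) (q : ES d × ES d) :
    gaussHamMod h (flipMom q) = gaussHamMod h q := by
  simp [gaussHamMod, flipMom]

lemma gaussHamMod_iter {d : ℕ} (h : ℝ) (i : ℤ) (p : ES d × ES d) :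
    gaussHamMod h (gaussLeapfrogIter h i p) = gaussHamMod h p := by
  cases i with
  | ofNat n =>
    show gaussHamMod h ((gaussLeapfrog h)^[n] p) = _
    induction n with
    | zero => rfl
    | succ n ih =>
      rw [Function.iterate_succ_apply', gaussHamMod_step, ih]
  | negSucc n =>
    show gaussHamMod h ((flipMom ∘ gaussLeapfrog h ∘ flipMom)^[n + 1] p) = _
    induction n + 1 with
    | zero => rfl
    | succ m ih =>
      rw [Function.iterate_succ_apply', Function.comp_apply, Function.comp_apply,
        gaussHamMod_flip, gaussHamMod_step, gaussHamMod_flip, ih]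

/-- For the standard normal target and `h ∈ (0,2)`, the energy error envelope
along the two-sided leapfrog path is controlled by the modified Hamiltonian:
`H(Φ_h^i(θ,ρ)) − H(Φ_h^j(θ,ρ)) ≤ (h²/(4 − h²))·H_h(θ,ρ)` for all `i, j ∈ ℤ`. -/
theorem gauss_energy_error_envelope {d : ℕ} (h : ℝ) (h0 : 0 < h) (h2 : h < 2)
    (p : ES d × ES d) :
    ∀ i j : ℤ,
      gaussHam (gaussLeapfrogIter h i p) - gaussHam (gaussLeapfrogIter h j p) ≤
        h ^ 2 / (4 - h ^ 2) * gaussHamMod h p := by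
  intro i j
  have hc : (0:ℝ) < 1 - h ^ 2 / 4 := by nlinarith
  have key : ∀ q : ES d × ES d, gaussHam q = gaussHamMod h q + h ^ 2 / 8 * ‖q.1‖ ^ 2 := by
    intro q; simp [gaussHam, gaussHamMod]; ring
  set qi := gaussLeapfrogIter h i p
  set qj := gaussLeapfrogIter h j p
  have hi : gaussHamMod h qi = gaussHamMod h p := gaussHamMod_iter h i p
  have hj : gaussHamMod h qj = gaussHamMod h p := gaussHamMod_iter h j p
  have hbound : (1 / 2) * (1 - h ^ 2 / 4) * ‖qi.1‖ ^ 2 ≤ gaussHamMod h p := by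
    rw [← hi]; unfold gaussHamMod; nlinarith [sq_nonneg ‖qi.2‖]
  have hjge : gaussHamMod h p ≤ gaussHam qj := by
    rw [key qj, ← hj]; nlinarith [sq_nonneg ‖qj.1‖]
  have hieq := key qi
  have h4 : (0:ℝ) < 4 - h ^ 2 := by nlinarith
  have hpos : (0:ℝ) ≤ h ^ 2 / (4 - h ^ 2) := by positivity
  have hmul := mul_le_mul_of_nonneg_left hbound hpos
  have heq : h ^ 2 / (4 - h ^ 2) * (1 / 2 * (1 - h ^ 2 / 4) * ‖qi.1‖ ^ 2)
      = h ^ 2 / 8 * ‖qi.1‖ ^ 2 := by field_simp; ring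
  linarith [heq ▸ hmul]
end
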